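/- Assume there exist an index i and a node v ∈ N^{(i)} \ {c_*^{(i)}} such that λ_v^{(i)} − λ_{c_*}^{(i)} = Δ_train. Set ρ = λ_* + Δ_train. Then the maximum of γ(u) over unit vectors u = (u_A, u_R) ∈ ℝ² with u_A, u_R ≥ 0 is attained uniquely at u^* = (u_A^*, u_R^*) = (1/√(1+ρ²), ρ/√(1+ρ²)); in particular u_R^*/u_A^* = λ_* + Δ_train and u_A^*, u_R^* > 0. -/

import Mathlib

private lemma stmt16_aux_le (L D r s uA uR : ℝ) (hL : 0 < L) (hD : 0 ≤ D)
    (hr : r = L + D) (hs2 : s ^ 2 = 1 + r ^ 2) (hs : 0 < s)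
    (hA : 0 ≤ uA) (hR : 0 ≤ uR) (hunit : uA ^ 2 + uR ^ 2 = 1) :
    min (L * uA) (uR - D * uA) ≤ L / s := by
  by_contra hcon
  push_neg at hcon
  have hlt1 : L / s < L * uA := lt_of_lt_of_le hcon (min_le_left _ _)
  have hlt2 : L / s < uR - D * uA := lt_of_lt_of_le hcon (min_le_right _ _)
  have h1 : 1 < s * uA := by
    have := (div_lt_iff₀ hs).mp hlt1
    nlinarith
  have h2 : r < s * uR := by
    have := (div_lt_iff₀ hs).mp hlt2
    nlinarith
  have e1 : 1 < (s * uA) ^ 2 := by nlinarith [sq_nonneg (s * uA - 1)]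
  have e2 : r ^ 2 < (s * uR) ^ 2 := by nlinarith [sq_nonneg (s * uR - r), hL]
  have hsum : (s * uA) ^ 2 + (s * uR) ^ 2 = s ^ 2 := by
    rw [mul_pow, mul_pow, ← mul_add, hunit, mul_one]
  linarith

private lemma stmt16_aux_eq (L D r s uA uR : ℝ) (hL : 0 < L) (hD : 0 ≤ D)
    (hr : r = L + D) (hs2 : s ^ 2 = 1 + r ^ 2) (hs : 0 < s)
    (hA : 0 ≤ uA) (hR : 0 ≤ uR) (hunit : uA ^ 2 + uR ^ 2 = 1)
    (heq : min (L * uA) (uR - D * uA) = L / s) :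
    uA = 1 / s ∧ uR = r / s := by
  have hle1 : L / s ≤ L * uA := by rw [← heq]; exact min_le_left _ _
  have hle2 : L / s ≤ uR - D * uA := by rw [← heq]; exact min_le_right _ _
  have h1 : 1 ≤ s * uA := by
    have := (div_le_iff₀ hs).mp hle1
    nlinarith
  have h2 : r ≤ s * uR := by
    have := (div_le_iff₀ hs).mp hle2
    nlinarith
  have hsum : (s * uA) ^ 2 + (s * uR) ^ 2 = 1 + r ^ 2 := by
    rw [mul_pow, mul_pow, ← mul_add, hunit, mul_one, hs2]
  have e1lb : (1 : ℝ) ≤ (s * uA) ^ 2 := by nlinarith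
  have e2lb : r ^ 2 ≤ (s * uR) ^ 2 := by nlinarith [hL]
  have e1 : (s * uA) ^ 2 = 1 := by linarith
  have e2 : (s * uR) ^ 2 = r ^ 2 := by linarith
  have f1 : s * uA = 1 := by nlinarith [sq_nonneg (s * uA - 1)]
  have f2 : s * uR = r := by nlinarith [sq_nonneg (s * uR - r), hL]
  constructor
  · rw [eq_div_iff hs.ne']; linear_combination f1
  · rw [eq_div_iff hs.ne']; linear_combination f2

/-- the maximum of the margin γ over unit directions with nonnegative
coordinates is attained uniquely at u* = (1/√(1+ρ²), ρ/√(1+ρ²)) with ρ = λ_* + Δ_train;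
in particular u*_R/u*_A = λ_* + Δ_train and both coordinates are positive. -/
theorem stmt16 {ι τ : Type*} [Fintype ι] [Nonempty ι] [DecidableEq τ]
    (Vi Ni : ι → Finset τ) (hsub : ∀ i, Ni i ⊆ Vi i)
    (c1 c2 cstar cperp : ι → τ)
    (hc1 : ∀ i, c1 i ∈ Vi i) (hc2 : ∀ i, c2 i ∈ Vi i) (hc12 : ∀ i, c1 i ≠ c2 i)
    (hpair : ∀ i, ({cstar i, cperp i} : Finset τ) = {c1 i, c2 i})
    (hstar : ∀ i, cstar i ∈ Ni i) (hperp : ∀ i, cperp i ∉ Ni i)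
    (lam : ι → τ → ℝ)
    (hlampos : ∀ i, ∀ v ∈ Ni i, 0 < lam i v) (hlamle : ∀ i v, lam i v ≤ 1)
    (hlamzero : ∀ i v, v ∉ Ni i → lam i v = 0)
    (x : ι → τ → ℝ × ℝ)
    (hx : ∀ i v, x i v = (lam i v, if v = c1 i ∨ v = c2 i then 1 else 0))
    (lamStar : ℝ) (hlamStar : lamStar = sInf {y : ℝ | ∃ i : ι, y = lam i (cstar i)})
    (ΔTrain : ℝ)
    (hΔTrain : ΔTrain = sSup (insert 0
      {y : ℝ | ∃ i : ι, ∃ v ∈ (Ni i).erase (cstar i),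
        y = max (lam i v - lam i (cstar i)) 0}))
    (γ : ℝ × ℝ → ℝ)
    (hγ : ∀ u : ℝ × ℝ, γ u = sInf {y : ℝ | ∃ i : ι, ∃ v ∈ (Vi i).erase (cstar i),
      y = u.1 * ((x i (cstar i)).1 - (x i v).1) + u.2 * ((x i (cstar i)).2 - (x i v).2)})
    (hattain : ∃ i : ι, ∃ v ∈ (Ni i).erase (cstar i),
      lam i v - lam i (cstar i) = ΔTrain)
    (ρ : ℝ) (hρ : ρ = lamStar + ΔTrain)
    (ustar : ℝ × ℝ)
    (hustar : ustar = (1 / Real.sqrt (1 + ρ ^ 2), ρ / Real.sqrt (1 + ρ ^ 2))) :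
    (∀ u : ℝ × ℝ, 0 ≤ u.1 → 0 ≤ u.2 → u.1 ^ 2 + u.2 ^ 2 = 1 → γ u ≤ γ ustar)
    ∧ (∀ u : ℝ × ℝ, 0 ≤ u.1 → 0 ≤ u.2 → u.1 ^ 2 + u.2 ^ 2 = 1 →
        γ u = γ ustar → u = ustar)
    ∧ ustar.2 / ustar.1 = lamStar + ΔTrain
    ∧ 0 < ustar.1 ∧ 0 < ustar.2 := by
  -- candidate membership characterization
  have hmem : ∀ i v, (v = c1 i ∨ v = c2 i) ↔ (v = cstar i ∨ v = cperp i) := by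
    intro i v
    constructor
    · intro hv
      have h1 : v ∈ ({c1 i, c2 i} : Finset τ) := by simpa using hv
      rw [← hpair i] at h1
      simpa using h1
    · intro hv
      have h1 : v ∈ ({cstar i, cperp i} : Finset τ) := by simpa using hv
      rw [hpair i] at h1
      simpa using h1
  have hne : ∀ i, cstar i ≠ cperp i := by
    intro i h
    exact hperp i (h ▸ hstar i)
  have hRstar : ∀ i, cstar i = c1 i ∨ cstar i = c2 i := fun i => (hmem i _).2 (Or.inl rfl)
  have hperpV : ∀ i, cperp i ∈ Vi i := by
    intro i
    rcases (hmem i (cperp i)).2 (Or.inr rfl) with h | h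
    · exact h ▸ hc1 i
    · exact h ▸ hc2 i
  -- lamStar facts
  have hLset : {y : ℝ | ∃ i : ι, y = lam i (cstar i)} =
      Set.range (fun i => lam i (cstar i)) := by
    ext y; simp [eq_comm, Set.mem_setOf_eq]
  have hLfin : ({y : ℝ | ∃ i : ι, y = lam i (cstar i)}).Finite := by
    rw [hLset]; exact Set.finite_range _
  have hLne : ({y : ℝ | ∃ i : ι, y = lam i (cstar i)}).Nonempty :=
    ⟨lam (Classical.arbitrary ι) (cstar (Classical.arbitrary ι)), ⟨Classical.arbitrary ι, rfl⟩⟩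
  have hLmem : lamStar ∈ {y : ℝ | ∃ i : ι, y = lam i (cstar i)} := by
    rw [hlamStar]; exact hLne.csInf_mem hLfin
  obtain ⟨i0, hi0⟩ := hLmem
  have hLle : ∀ i, lamStar ≤ lam i (cstar i) := by
    intro i
    rw [hlamStar]
    exact csInf_le hLfin.bddBelow ⟨i, rfl⟩
  have hLpos : 0 < lamStar := hi0 ▸ hlampos i0 _ (hstar i0)
  -- ΔTrain facts
  have hDbdd : BddAbove (insert 0
      {y : ℝ | ∃ i : ι, ∃ v ∈ (Ni i).erase (cstar i),
        y = max (lam i v - lam i (cstar i)) 0}) := by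
    refine ⟨1, ?_⟩
    rintro y (rfl | ⟨i, v, hv, rfl⟩)
    · norm_num
    · have h1 := hlamle i v
      have h2 := (hlampos i _ (hstar i)).le
      exact max_le (by linarith) (by norm_num)
  have hΔ0 : 0 ≤ ΔTrain := by
    rw [hΔTrain]; exact le_csSup hDbdd (Set.mem_insert _ _)
  have hΔle : ∀ i, ∀ v ∈ (Ni i).erase (cstar i),
      lam i v - lam i (cstar i) ≤ ΔTrain := by
    intro i v hv
    have h1 : max (lam i v - lam i (cstar i)) 0 ≤ ΔTrain := by
      rw [hΔTrain]
      exact le_csSup hDbdd (Set.mem_insert_of_mem _ ⟨i, v, hv, rfl⟩)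
    exact le_trans (le_max_left _ _) h1
  obtain ⟨i1, v1, hv1, hv1Δ⟩ := hattain
  -- key formula for γ on the nonneg quadrant
  have keyγ : ∀ u : ℝ × ℝ, 0 ≤ u.1 → 0 ≤ u.2 →
      γ u = min (lamStar * u.1) (u.2 - ΔTrain * u.1) := by
    intro u hA hR
    set m := min (lamStar * u.1) (u.2 - ΔTrain * u.1) with hm
    set S := {y : ℝ | ∃ i : ι, ∃ v ∈ (Vi i).erase (cstar i),
      y = u.1 * ((x i (cstar i)).1 - (x i v).1) + u.2 * ((x i (cstar i)).2 - (x i v).2)}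
      with hSdef
    have hval : ∀ i : ι, ∀ v ∈ (Vi i).erase (cstar i),
        u.1 * ((x i (cstar i)).1 - (x i v).1) + u.2 * ((x i (cstar i)).2 - (x i v).2)
        = if v = cperp i then u.1 * lam i (cstar i)
          else u.1 * (lam i (cstar i) - lam i v) + u.2 := by
      intro i v hv
      have hvne : v ≠ cstar i := (Finset.mem_erase.mp hv).1
      rw [hx, hx]
      simp only
      rw [if_pos (hRstar i)]
      by_cases hvp : v = cperp i
      · rw [if_pos ((hmem i v).2 (Or.inr hvp)), if_pos hvp]
        have h3 : lam i v = 0 := by rw [hvp]; exact hlamzero i _ (hperp i)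
        rw [h3]; ring
      · rw [if_neg (fun h => ((hmem i v).1 h).elim hvne hvp), if_neg hvp]
        ring
    have hlb : ∀ y ∈ S, m ≤ y := by
      rintro y ⟨i, v, hv, rfl⟩
      rw [hval i v hv]
      by_cases hvp : v = cperp i
      · rw [if_pos hvp]
        refine le_trans (min_le_left _ _) ?_
        nlinarith [mul_le_mul_of_nonneg_right (hLle i) hA]
      · rw [if_neg hvp]
        by_cases hvN : v ∈ Ni i
        · have h := hΔle i v (Finset.mem_erase.mpr ⟨(Finset.mem_erase.mp hv).1, hvN⟩)
          refine le_trans (min_le_right _ _) ?_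
          nlinarith
        · have h0 : lam i v = 0 := hlamzero i v hvN
          refine le_trans (min_le_left _ _) ?_
          rw [h0]
          nlinarith [mul_le_mul_of_nonneg_right (hLle i) hA]
    have hmem1 : lamStar * u.1 ∈ S := by
      have hcm : cperp i0 ∈ (Vi i0).erase (cstar i0) :=
        Finset.mem_erase.mpr ⟨fun h => (hne i0) h.symm, hperpV i0⟩
      refine ⟨i0, cperp i0, hcm, ?_⟩
      rw [hval i0 _ hcm, if_pos rfl, hi0]; ring
    have hmem2 : u.2 - ΔTrain * u.1 ∈ S := by
      have hv1V : v1 ∈ (Vi i1).erase (cstar i1) :=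
        Finset.mem_erase.mpr ⟨(Finset.mem_erase.mp hv1).1,
          hsub i1 (Finset.mem_erase.mp hv1).2⟩
      refine ⟨i1, v1, hv1V, ?_⟩
      have hvp : v1 ≠ cperp i1 := fun h => hperp i1 (h ▸ (Finset.mem_erase.mp hv1).2)
      rw [hval i1 v1 hv1V, if_neg hvp]
      linear_combination u.1 * hv1Δ
    have hbdd : BddBelow S := ⟨m, hlb⟩
    rw [hγ u]
    refine le_antisymm ?_ (le_csInf ⟨_, hmem1⟩ hlb)
    rcases le_total (lamStar * u.1) (u.2 - ΔTrain * u.1) with h | h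
    · rw [hm, min_eq_left h]; exact csInf_le hbdd hmem1
    · rw [hm, min_eq_right h]; exact csInf_le hbdd hmem2
  -- analysis of the optimum
  set s := Real.sqrt (1 + ρ ^ 2) with hs
  have hρpos : 0 < ρ := by rw [hρ]; linarith
  have hs2 : s ^ 2 = 1 + ρ ^ 2 := Real.sq_sqrt (by positivity)
  have hspos : 0 < s := Real.sqrt_pos.2 (by positivity)
  have hu1 : ustar.1 = 1 / s := by rw [hustar]
  have hu2 : ustar.2 = ρ / s := by rw [hustar]
  have hu1pos : 0 < ustar.1 := by rw [hu1]; positivity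
  have hu2pos : 0 < ustar.2 := by rw [hu2]; positivity
  have hγstar : γ ustar = lamStar / s := by
    rw [keyγ ustar hu1pos.le hu2pos.le, hu1, hu2]
    have h1 : lamStar * (1 / s) = lamStar / s := by ring
    have h2 : ρ / s - ΔTrain * (1 / s) = lamStar / s := by
      rw [hρ]; field_simp; ring
    rw [h1, h2, min_self]
  refine ⟨?_, ?_, ?_, hu1pos, hu2pos⟩
  · intro u hA hR hunit
    rw [keyγ u hA hR, hγstar]
    exact stmt16_aux_le lamStar ΔTrain ρ s u.1 u.2 hLpos hΔ0 hρ hs2 hspos hA hR hunit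
  · intro u hA hR hunit heq
    rw [keyγ u hA hR, hγstar] at heq
    obtain ⟨g1, g2⟩ :=
      stmt16_aux_eq lamStar ΔTrain ρ s u.1 u.2 hLpos hΔ0 hρ hs2 hspos hA hR hunit heq
    rw [hustar]
    exact Prod.ext g1 g2
  · rw [hu1, hu2, hρ]
    field_simp
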